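/- Let Δ be an additive subgroup of ℂ, let b ∈ ℂ, and let φ: Δ → ℂ be an additive group homomorphism. On the vector space A with basis {x_α : α ∈ Δ}, the bracket [x_α, x_β] = (1/b)(φ(β)α − φ(α)β + b(φ(β) − φ(α))) x_{α+β} (assuming b ≠ 0) defines a Lie algebra structure on A, and together with x_α ∘ x_β = (β+b)x_{α+β} satisfies the Gel'fand–Dorfman compatibility [x_γ∘x_α, x_β] − [x_γ∘x_β, x_α] + [x_γ,x_α]∘x_β − [x_γ,x_β]∘x_α − x_γ∘[x_α,x_β] = 0. -/

import Mathlib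

open Finsupp

noncomputable def mkBil (Δ : AddSubgroup ℂ) (f : Δ → Δ → ℂ) :
    (Δ →₀ ℂ) →ₗ[ℂ] (Δ →₀ ℂ) →ₗ[ℂ] (Δ →₀ ℂ) :=
  Finsupp.lift _ ℂ Δ (fun α => Finsupp.lift _ ℂ Δ (fun β => f α β • single (α + β) 1))

lemma mkBil_single (Δ : AddSubgroup ℂ) (f : Δ → Δ → ℂ) (α β : Δ) (x y : ℂ) :
    mkBil Δ f (single α x) (single β y) = (x * y * f α β) • single (α + β) 1 := by
  simp [mkBil, Finsupp.lift_apply, Finsupp.sum_single_index, mul_smul]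

set_option maxHeartbeats 1000000 in
theorem stmt_11 (Δ : AddSubgroup ℂ) (b : ℂ) (hb : b ≠ 0)
    (φ : Δ →+ ℂ) :
    ∃ br circ : (Δ →₀ ℂ) →ₗ[ℂ] (Δ →₀ ℂ) →ₗ[ℂ] (Δ →₀ ℂ),
      (∀ α β : Δ, br (single α 1) (single β 1) =
        ((1 / b) * (φ β * (α : ℂ) - φ α * (β : ℂ) + b * (φ β - φ α))) •
          single (α + β) 1) ∧
      (∀ α β : Δ, circ (single α 1) (single β 1) =
        ((β : ℂ) + b) • single (α + β) 1) ∧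
      (∀ u, br u u = 0) ∧
      (∀ u v w, br (br u v) w + br (br v w) u + br (br w u) v = 0) ∧
      (∀ u v w,
        br (circ w u) v - br (circ w v) u + circ (br w u) v - circ (br w v) u -
          circ w (br u v) = 0) := by
  set c : Δ → Δ → ℂ := fun α β =>
    (1 / b) * (φ β * (α : ℂ) - φ α * (β : ℂ) + b * (φ β - φ α)) with hc
  set n : Δ → Δ → ℂ := fun _ β => (β : ℂ) + b with hn
  refine ⟨mkBil Δ c, mkBil Δ n, ?_, ?_, ?_, ?_, ?_⟩
  · intro α β; rw [mkBil_single]; simp only [hc, hn]; ring_nf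
  · intro α β; rw [mkBil_single]; simp only [hc, hn]; ring_nf
  · -- antisymmetry then alternating
    have anti : ∀ u v, mkBil Δ c u v = - mkBil Δ c v u := by
      intro u v
      induction u using Finsupp.induction_linear with
      | zero => simp
      | add f g hf hg => simp [hf, hg]; abel
      | single a x =>
        induction v using Finsupp.induction_linear with
        | zero => simp
        | add f g hf hg => simp [hf, hg]; abel
        | single a' y =>
          rw [mkBil_single, mkBil_single, add_comm a' a, ← neg_smul, ← sub_eq_zero,
            ← sub_smul]
          have : x * y * c a a' - -(y * x * c a' a) = 0 := by
            simp only [hc]; field_simp; ring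
          rw [this, zero_smul]
    intro u
    have h := anti u u
    have : (2 : ℂ) • mkBil Δ c u u = 0 := by
      rw [two_smul]; nth_rewrite 1 [h]; abel
    simpa using smul_eq_zero.mp this |>.resolve_left (by norm_num)
  · intro u v w
    induction u using Finsupp.induction_linear with
    | zero => simp
    | add f g hf hg => simp at hf hg ⊢; linear_combination (norm := module) hf + hg
    | single a x =>
    induction v using Finsupp.induction_linear with
    | zero => simp
    | add f g hf hg => simp at hf hg ⊢; linear_combination (norm := module) hf + hg
    | single a' y =>
    induction w using Finsupp.induction_linear with
    | zero => simp
    | add f g hf hg => simp at hf hg ⊢; linear_combination (norm := module) hf + hg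
    | single a'' z =>
    simp only [mkBil_single, map_smul, LinearMap.smul_apply, smul_smul]
    have e1 : a' + a'' + a = a + a' + a'' := by abel
    have e2 : a'' + a + a' = a + a' + a'' := by abel
    rw [e1, e2]
    simp only [← add_smul]
    apply smul_eq_zero_of_left
    simp only [hc, map_add, AddSubgroup.coe_add]; field_simp; ring
  · intro u v w
    induction u using Finsupp.induction_linear with
    | zero => simp
    | add f g hf hg => simp at hf hg ⊢; linear_combination (norm := module) hf + hg
    | single a x =>
    induction v using Finsupp.induction_linear with
    | zero => simp
    | add f g hf hg => simp at hf hg ⊢; linear_combination (norm := module) hf + hg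
    | single a' y =>
    induction w using Finsupp.induction_linear with
    | zero => simp
    | add f g hf hg => simp at hf hg ⊢; linear_combination (norm := module) hf + hg
    | single a'' z =>
    simp only [mkBil_single, map_smul, LinearMap.smul_apply, smul_smul]
    have e1 : a'' + a + a' = a'' + (a + a') := by abel
    have e2 : a'' + a' + a = a'' + (a + a') := by abel
    rw [e1, e2]
    simp only [← sub_smul, ← add_smul]
    apply smul_eq_zero_of_left
    simp only [hc, hn, map_add, AddSubgroup.coe_add]; field_simp; ring
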